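/- Let f = f_d x^d + ⋯ + f_1 x over a field with f_1 ≠ 0 (so f_0 = 0 and f is squarefree at 0). Then for all n ≥ 0 and all k with n - k ≠ 0 in the field, (n - k) f_1 f^n_k = -Σ_{j=1}^{d-1} (n(j+1) - k + j) f_{j+1} f^n_{k-j}, expressing f^n_k as a combination of the d-1 consecutive coefficients to its left. -/

import Mathlib

open Polynomial Finset

/-- Coefficient of a polynomial at an integer index, zero for negative indices. -/
noncomputable def coeffZ {F : Type*} [Semiring F] (g : Polynomial F) (k : ℤ) : F :=
  if 0 ≤ k then g.coeff k.toNat else 0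

private lemma aux_key {F : Type*} [Field F] (f : Polynomial F) (n k : ℕ) :
    ∑ j ∈ Finset.range (k + 2),
      (((k + 1 - j : ℕ) : F) - (n : F) * (j : F)) * f.coeff j * (f ^ n).coeff (k + 1 - j) = 0 := by
  have hpoly : f * derivative (f ^ n) = C (n : F) * (derivative f * f ^ n) := by
    cases n with
    | zero => simp
    | succ m =>
      rw [derivative_pow, Nat.succ_sub_one, pow_succ]
      push_cast
      ring
  have hco : ∑ j ∈ Finset.range (k + 1), f.coeff j * (derivative (f ^ n)).coeff (k - j)
      = (n : F) * ∑ j ∈ Finset.range (k + 1), (derivative f).coeff j * (f ^ n).coeff (k - j) := by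
    have h := congrArg (fun p => Polynomial.coeff p k) hpoly
    rw [Polynomial.coeff_C_mul, Polynomial.coeff_mul, Polynomial.coeff_mul,
      Finset.Nat.sum_antidiagonal_eq_sum_range_succ (fun a b => f.coeff a * (derivative (f ^ n)).coeff b),
      Finset.Nat.sum_antidiagonal_eq_sum_range_succ (fun a b => (derivative f).coeff a * (f ^ n).coeff b)] at h
    exact h
  have hL : ∑ j ∈ Finset.range (k + 1), f.coeff j * (derivative (f ^ n)).coeff (k - j)
      = ∑ j ∈ Finset.range (k + 2), f.coeff j * (f ^ n).coeff (k + 1 - j) * ((k + 1 - j : ℕ) : F) := by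
    conv_rhs => rw [Finset.sum_range_succ]
    have h0 : (k + 1 - (k + 1) : ℕ) = 0 := by omega
    rw [h0]
    simp only [Nat.cast_zero, mul_zero, add_zero]
    refine Finset.sum_congr rfl fun j hj => ?_
    rw [Finset.mem_range] at hj
    rw [coeff_derivative]
    have h1 : (k - j) + 1 = k + 1 - j := by omega
    have h2 : ((k - j : ℕ) : F) + 1 = ((k + 1 - j : ℕ) : F) := by
      rw [Nat.cast_sub (by omega : j ≤ k), Nat.cast_sub (by omega : j ≤ k + 1)]
      push_cast
      ring
    rw [h1, h2]
    ring
  have hR : ∑ j ∈ Finset.range (k + 1), (derivative f).coeff j * (f ^ n).coeff (k - j)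
      = ∑ j ∈ Finset.range (k + 2), f.coeff j * (j : F) * (f ^ n).coeff (k + 1 - j) := by
    rw [Finset.sum_range_succ' (fun j => f.coeff j * (j : F) * (f ^ n).coeff (k + 1 - j)) (k + 1)]
    simp only [Nat.cast_zero, mul_zero, zero_mul, add_zero]
    refine Finset.sum_congr rfl fun j hj => ?_
    rw [coeff_derivative]
    have h1 : k + 1 - (j + 1) = k - j := by omega
    rw [h1]
    push_cast
    ring
  rw [hL, hR] at hco
  calc ∑ j ∈ Finset.range (k + 2),
      (((k + 1 - j : ℕ) : F) - (n : F) * (j : F)) * f.coeff j * (f ^ n).coeff (k + 1 - j)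
      = (∑ j ∈ Finset.range (k + 2), f.coeff j * (f ^ n).coeff (k + 1 - j) * ((k + 1 - j : ℕ) : F))
        - (n : F) * ∑ j ∈ Finset.range (k + 2), f.coeff j * (j : F) * (f ^ n).coeff (k + 1 - j) := by
        rw [Finset.mul_sum, ← Finset.sum_sub_distrib]
        exact Finset.sum_congr rfl fun j hj => by ring
    _ = 0 := by rw [← hco]; ring

theorem coeff_pow_left_recurrence_f0_zero {F : Type*} [Field F] (f : Polynomial F)
    (d : ℕ) (hd : f.natDegree ≤ d) (h0 : f.coeff 0 = 0) (h1 : f.coeff 1 ≠ 0)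
    (n k : ℕ) (hk : (n : F) - (k : F) ≠ 0) :
    ((n : F) - (k : F)) * f.coeff 1 * coeffZ (f ^ n) (k : ℤ) =
      -∑ j ∈ Finset.Icc 1 (d - 1),
        (((n : ℤ) * ((j : ℤ) + 1) - (k : ℤ) + (j : ℤ) : ℤ) : F) * f.coeff (j + 1) *
          coeffZ (f ^ n) ((k : ℤ) - (j : ℤ)) := by
  have hd1 : 1 ≤ d := by
    by_contra h
    push_neg at h
    interval_cases d
    exact h1 (Polynomial.coeff_eq_zero_of_natDegree_lt (by omega))
  set U : ℕ → F := fun j =>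
    (((n : ℤ) * j + j - ((k : ℤ) + 1) : ℤ) : F) * f.coeff j * coeffZ (f ^ n) ((k : ℤ) + 1 - j)
    with hU
  have hsum0 : ∑ j ∈ Finset.range (k + 2), U j = 0 := by
    have hA := aux_key f n k
    rw [← neg_eq_zero, ← Finset.sum_neg_distrib] at hA
    rw [← hA]
    refine Finset.sum_congr rfl fun j hj => ?_
    rw [Finset.mem_range] at hj
    simp only [hU]
    have hnn : (0 : ℤ) ≤ (k : ℤ) + 1 - j := by omega
    have ht : ((k : ℤ) + 1 - j).toNat = k + 1 - j := by omega
    rw [coeffZ, if_pos hnn, ht]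
    have hc : (((n : ℤ) * j + j - ((k : ℤ) + 1) : ℤ) : F)
        = -(((k + 1 - j : ℕ) : F) - (n : F) * (j : F)) := by
      rw [Nat.cast_sub (by omega : j ≤ k + 1)]
      push_cast
      ring
    rw [hc]
    ring
  have hvanish_neg : ∀ j, k + 1 < j → U j = 0 := by
    intro j hj
    simp only [hU]
    rw [coeffZ, if_neg (by omega)]
    ring
  have hvanish_deg : ∀ j, d < j → U j = 0 := by
    intro j hj
    simp only [hU]
    rw [Polynomial.coeff_eq_zero_of_natDegree_lt (by omega)]
    ring
  have hIcc : ∑ j ∈ Finset.Icc 1 d, U j = 0 := by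
    have hins : Finset.range (d + 1) = insert 0 (Finset.Icc 1 d) := by
      ext x; simp only [Finset.mem_range, Finset.mem_insert, Finset.mem_Icc]; omega
    have hU0 : U 0 = 0 := by simp only [hU]; rw [h0]; ring
    have e1 : ∑ j ∈ Finset.range (d + 1), U j = ∑ j ∈ Finset.Icc 1 d, U j := by
      rw [hins, Finset.sum_insert (by simp), hU0, zero_add]
    have e2 : ∑ j ∈ Finset.range (d + 1), U j = ∑ j ∈ Finset.range (max (d + 1) (k + 2)), U j :=
      Finset.sum_subset (Finset.range_subset_range.mpr (le_max_left _ _))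
        (fun x hx hx' => hvanish_deg x (by simp only [Finset.mem_range] at hx hx'; omega))
    have e3 : ∑ j ∈ Finset.range (k + 2), U j = ∑ j ∈ Finset.range (max (d + 1) (k + 2)), U j :=
      Finset.sum_subset (Finset.range_subset_range.mpr (le_max_right _ _))
        (fun x hx hx' => hvanish_neg x (by simp only [Finset.mem_range] at hx hx'; omega))
    rw [← e1, e2, ← e3, hsum0]
  -- split off j = 1
  have hsplit : Finset.Icc 1 d = insert 1 (Finset.Icc 2 d) := by
    ext x; simp only [Finset.mem_insert, Finset.mem_Icc]; omega
  rw [hsplit, Finset.sum_insert (by simp)] at hIcc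
  have hU1 : U 1 = ((n : F) - (k : F)) * f.coeff 1 * coeffZ (f ^ n) (k : ℤ) := by
    simp only [hU]
    have e1 : ((n : ℤ) * (1 : ℕ) + (1 : ℕ) - ((k : ℤ) + 1)) = (n : ℤ) - k := by push_cast; ring
    have e2 : ((k : ℤ) + 1 - ((1 : ℕ) : ℤ)) = (k : ℤ) := by push_cast; ring
    rw [e1, e2]
    push_cast
    ring
  have hre : ∑ j ∈ Finset.Icc 2 d, U j
      = ∑ j ∈ Finset.Icc 1 (d - 1),
        (((n : ℤ) * ((j : ℤ) + 1) - (k : ℤ) + (j : ℤ) : ℤ) : F) * f.coeff (j + 1) *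
          coeffZ (f ^ n) ((k : ℤ) - (j : ℤ)) := by
    have hmap : Finset.Icc 2 d = Finset.map (addRightEmbedding 1) (Finset.Icc 1 (d - 1)) := by
      rw [Finset.map_add_right_Icc]
      congr 1
      omega
    rw [hmap, Finset.sum_map]
    refine Finset.sum_congr rfl fun j hj => ?_
    simp only [hU, addRightEmbedding_apply]
    have hc : ((n : ℤ) * (j + 1) + (j + 1) - ((k : ℤ) + 1) : ℤ)
        = ((n : ℤ) * ((j : ℤ) + 1) - (k : ℤ) + (j : ℤ)) := by ring
    have hi : ((k : ℤ) + 1 - ((j : ℕ) + 1 : ℕ)) = ((k : ℤ) - (j : ℤ)) := by push_cast; ring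
    rw [← hc, ← hi]
    push_cast
    ring_nf
  rw [← hU1, ← hre]
  linear_combination hIcc
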